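/- For all natural numbers n and all complex ρ: Σ_{m=0}^{n} (-1)^m · Σ_{k=0}^{m} C(m,k) · C(n-m,k) · ρ^k equals 0 if n is odd, and equals (1-ρ)^{n/2} if n is even. -/

import Mathlib

open Finset Polynomial

private lemma alt_sum_C (N : ℕ) :
    ∑ i ∈ range (N + 1), (-1 : ℂ) ^ i * (N.choose i : ℂ) = if N = 0 then 1 else 0 := by
  have h := Int.alternating_sum_range_choose (n := N)
  have := congrArg (fun z : ℤ => (z : ℂ)) h
  push_cast at this
  rw [this]

private lemma L3 (n j : ℕ) (hj : j ≤ n) :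
    ∑ m ∈ range (n + 1), (-1 : ℂ) ^ m * (m.choose j : ℂ) * ((n - j).choose m : ℂ) =
      if n = 2 * j then (-1 : ℂ) ^ j else 0 := by
  by_cases h2j : 2 * j ≤ n
  · have hsub : Ico j (n - j + 1) ⊆ range (n + 1) := by
      intro x hx
      simp only [mem_Ico, mem_range] at hx ⊢
      omega
    rw [← Finset.sum_subset hsub ?hz]
    case hz =>
      intro x hx hx'
      simp only [mem_Ico, mem_range, not_and, not_lt] at hx hx'
      rcases lt_or_ge x j with h | h
      · simp [Nat.choose_eq_zero_of_lt h]
      · have : n - j < x := by omega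
        simp [Nat.choose_eq_zero_of_lt this]
    rw [Finset.sum_Ico_eq_sum_range]
    have hlen : n - j + 1 - j = n - 2 * j + 1 := by omega
    rw [hlen]
    have hstep : ∀ i ∈ range (n - 2 * j + 1),
        (-1 : ℂ) ^ (j + i) * ((j + i).choose j : ℂ) * ((n - j).choose (j + i) : ℂ) =
          ((n - j).choose j : ℂ) * ((-1 : ℂ) ^ j * ((-1 : ℂ) ^ i * ((n - 2 * j).choose i : ℂ))) := by
      intro i hi
      have hi' : i ≤ n - 2 * j := by
        have := mem_range.mp hi; omega
      have hle : j + i ≤ n - j := by omega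
      have := Nat.choose_mul (n := n - j) (k := j + i) (s := j) (Nat.le_add_right j i)
      have heq : (n - j).choose (j + i) * (j + i).choose j
          = (n - j).choose j * ((n - 2 * j).choose i) := by
        rw [this]
        congr 2 <;> omega
      have heqC := congrArg (fun z : ℕ => (z : ℂ)) heq
      push_cast at heqC
      rw [pow_add]
      linear_combination (-1 : ℂ) ^ j * (-1 : ℂ) ^ i * heqC
    rw [Finset.sum_congr rfl hstep, ← Finset.mul_sum, ← Finset.mul_sum, alt_sum_C]
    by_cases hn : n = 2 * j
    · rw [if_pos (by omega : n - 2 * j = 0), if_pos hn]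
      have : n - j = j := by omega
      rw [this, Nat.choose_self]
      simp
    · rw [if_neg (by omega : ¬ n - 2 * j = 0), if_neg hn]
      simp
  · have hz : ∀ m ∈ range (n + 1),
        (-1 : ℂ) ^ m * (m.choose j : ℂ) * ((n - j).choose m : ℂ) = 0 := by
      intro m hm
      rcases lt_or_ge m j with h | h
      · simp [Nat.choose_eq_zero_of_lt h]
      · have : n - j < m := by omega
        simp [Nat.choose_eq_zero_of_lt this]
    rw [Finset.sum_congr rfl hz]
    rw [if_neg (by omega)]
    simp

private lemma key (n m : ℕ) (hm : m ≤ n) (ρ : ℂ) :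
    ∑ k ∈ range (m + 1), (m.choose k : ℂ) * ((n - m).choose k : ℂ) * ρ ^ k =
      ∑ j ∈ range (m + 1), (m.choose j : ℂ) * (ρ - 1) ^ j * ((n - j).choose m : ℂ) := by
  have h1 : ((X + C ρ) ^ m * (X + 1) ^ (n - m) : ℂ[X]).coeff m =
      ∑ k ∈ range (m + 1), ρ ^ (m - k) * (m.choose k : ℂ) * ((n - m).choose (m - k) : ℂ) := by
    rw [add_pow, Finset.sum_mul, Polynomial.finset_sum_coeff]
    refine Finset.sum_congr rfl fun k hk => ?_
    have hk' : k ≤ m := Nat.lt_succ_iff.mp (mem_range.mp hk)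
    have hre : (X : ℂ[X]) ^ k * C ρ ^ (m - k) * ((m.choose k : ℕ) : ℂ[X]) * (X + 1) ^ (n - m)
        = C (ρ ^ (m - k) * (m.choose k : ℂ)) * ((X + 1) ^ (n - m) * X ^ k) := by
      simp only [map_mul, map_pow, map_natCast]
      ring
    rw [hre, Polynomial.coeff_C_mul, Polynomial.coeff_mul_X_pow', if_pos hk',
      Polynomial.coeff_X_add_one_pow]
  have h2 : ((X + C ρ) ^ m * (X + 1) ^ (n - m) : ℂ[X]).coeff m =
      ∑ j ∈ range (m + 1), (ρ - 1) ^ (m - j) * (m.choose j : ℂ) * ((n - m + j).choose m : ℂ) := by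
    have hXρ : (X + C ρ : ℂ[X]) = (X + 1) + C (ρ - 1) := by
      rw [map_sub, map_one]; ring
    rw [hXρ, add_pow, Finset.sum_mul, Polynomial.finset_sum_coeff]
    refine Finset.sum_congr rfl fun j hj => ?_
    have hre : ((X : ℂ[X]) + 1) ^ j * C (ρ - 1) ^ (m - j) * ((m.choose j : ℕ) : ℂ[X]) * (X + 1) ^ (n - m)
        = C ((ρ - 1) ^ (m - j) * (m.choose j : ℂ)) * (X + 1) ^ (n - m + j) := by
      simp only [map_mul, map_pow, map_natCast, pow_add]
      ring
    rw [hre, Polynomial.coeff_C_mul, Polynomial.coeff_X_add_one_pow]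
  have hL : ∑ k ∈ range (m + 1), (m.choose k : ℂ) * ((n - m).choose k : ℂ) * ρ ^ k =
      ∑ k ∈ range (m + 1), ρ ^ (m - k) * (m.choose k : ℂ) * ((n - m).choose (m - k) : ℂ) := by
    rw [← Finset.sum_range_reflect]
    refine Finset.sum_congr rfl fun j hj => ?_
    have hj' : j ≤ m := Nat.lt_succ_iff.mp (mem_range.mp hj)
    have e1 : m + 1 - 1 - j = m - j := by omega
    rw [e1, Nat.choose_symm hj']
    ring
  have hR : ∑ j ∈ range (m + 1), (m.choose j : ℂ) * (ρ - 1) ^ j * ((n - j).choose m : ℂ) =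
      ∑ j ∈ range (m + 1), (ρ - 1) ^ (m - j) * (m.choose j : ℂ) * ((n - m + j).choose m : ℂ) := by
    rw [← Finset.sum_range_reflect]
    refine Finset.sum_congr rfl fun j hj => ?_
    have hj' : j ≤ m := Nat.lt_succ_iff.mp (mem_range.mp hj)
    have e1 : m + 1 - 1 - j = m - j := by omega
    have e3 : n - (m - j) = n - m + j := by omega
    rw [e1, e3, Nat.choose_symm hj']
    ring
  rw [hL, ← h1, h2, hR]

theorem stmt_14 (n : ℕ) (ρ : ℂ) :
    ∑ m ∈ range (n + 1),
        (-1 : ℂ) ^ m * ∑ k ∈ range (m + 1), (m.choose k : ℂ) * ((n - m).choose k : ℂ) * ρ ^ k =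
      if Odd n then 0 else (1 - ρ) ^ (n / 2) := by
  have step1 : ∀ m ∈ range (n + 1),
      (-1 : ℂ) ^ m * ∑ k ∈ range (m + 1), (m.choose k : ℂ) * ((n - m).choose k : ℂ) * ρ ^ k =
        ∑ j ∈ range (n + 1),
          (-1 : ℂ) ^ m * ((m.choose j : ℂ) * (ρ - 1) ^ j * ((n - j).choose m : ℂ)) := by
    intro m hm
    have hm' : m ≤ n := Nat.lt_succ_iff.mp (mem_range.mp hm)
    rw [key n m hm' ρ]
    rw [Finset.mul_sum]
    refine Finset.sum_subset (by intro x hx; simp only [mem_range] at hx ⊢; omega) ?_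
    intro j hj hj'
    have : m < j := by
      simp only [mem_range, not_lt] at hj hj'; omega
    simp [Nat.choose_eq_zero_of_lt this]
  rw [Finset.sum_congr rfl step1, Finset.sum_comm]
  have step2 : ∀ j ∈ range (n + 1),
      (∑ m ∈ range (n + 1),
        (-1 : ℂ) ^ m * ((m.choose j : ℂ) * (ρ - 1) ^ j * ((n - j).choose m : ℂ))) =
        (ρ - 1) ^ j * (if n = 2 * j then (-1 : ℂ) ^ j else 0) := by
    intro j hj
    have hj' : j ≤ n := Nat.lt_succ_iff.mp (mem_range.mp hj)
    rw [← L3 n j hj', Finset.mul_sum]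
    refine Finset.sum_congr rfl fun m hm => by ring
  rw [Finset.sum_congr rfl step2]
  rcases Nat.even_or_odd n with he | ho
  · obtain ⟨N, hN⟩ := he
    have hNn : n = 2 * N := by omega
    have hmem : N ∈ range (n + 1) := by simp [mem_range]; omega
    rw [Finset.sum_eq_single_of_mem N hmem ?h0]
    case h0 =>
      intro j hj hjN
      rw [if_neg (by omega), mul_zero]
    rw [if_pos hNn, if_neg (Nat.not_odd_iff_even.mpr ⟨N, hN⟩)]
    have : n / 2 = N := by omega
    rw [this, ← mul_pow]
    ring_nf
  · rw [if_pos ho]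
    refine Finset.sum_eq_zero fun j hj => ?_
    rw [if_neg (by rcases ho with ⟨c, hc⟩; omega), mul_zero]
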